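/- Pathwise form of the adjoint discrete-time path-kernel identity: in the concrete setting below, the tangent expression equals the adjoint expression on each path, i.e. ⟨∇Φ(x_N), v_N⟩ + (Φ(x_N) − Φ^avg) ∑_{n=0}^{N−1} (α_n / σ(x_n)) ⟨b_n, v_n⟩ = ⟨ν_0, v_0⟩ + ∑_{k=0}^{N−1} ⟨ν_{k+1}, δf_k + δσ_k b_k⟩. -/
import Mathlib


open Matrix

/-- The gradient vector of a scalar function on `ℝ^M`, in the standard basis. -/
noncomputable def gradVec {M : ℕ} (g : (Fin M → ℝ) → ℝ) (x : Fin M → ℝ) : Fin M → ℝ :=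
  fun i => fderiv ℝ g x (Pi.single i 1)

/-- The Jacobian matrix of a map `ℝ^M → ℝ^M`, in the standard basis. -/
noncomputable def jac {M : ℕ} (f : (Fin M → ℝ) → (Fin M → ℝ)) (x : Fin M → ℝ) :
    Matrix (Fin M) (Fin M) ℝ :=
  Matrix.of fun i j => fderiv ℝ f x (Pi.single j 1) i

lemma vecMulVec_mulVec' {M : ℕ} (u w y : Fin M → ℝ) :
    (Matrix.vecMulVec u w).mulVec y = (w ⬝ᵥ y) • u := by
  ext i
  simp only [Matrix.vecMulVec, Matrix.mulVec, dotProduct, Pi.smul_apply,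
    smul_eq_mul, Matrix.of_apply]
  rw [Finset.sum_mul]
  exact Finset.sum_congr rfl fun j _ => by ring

/-- pathwise form of the adjoint discrete-time path-kernel
identity.  With the damped tangent process
`v_{n+1} = −α_n v_n + ∇f(x_n) v_n + δf_n + (⟨∇σ(x_n), v_n⟩ + δσ_n) b_n`
and the adjoint covector process `ν_N = ∇Φ(x_N)`,
`ν_k = −α_k ν_{k+1} + (∇f(x_k)ᵀ + ∇σ(x_k) b_kᵀ) ν_{k+1}
        + (Φ(x_N) − Φ^avg)(α_k/σ(x_k)) b_k`,
one has
`⟨∇Φ(x_N), v_N⟩ + (Φ(x_N) − Φ^avg) ∑_{n<N} (α_n/σ(x_n)) ⟨b_n, v_n⟩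
  = ⟨ν_0, v_0⟩ + ∑_{k<N} ⟨ν_{k+1}, δf_k + δσ_k b_k⟩`. -/
theorem adjoint_path_kernel_pathwise
    (M N : ℕ) (hM : 1 ≤ M) (hN : 1 ≤ N)
    (x b : ℕ → Fin M → ℝ)
    (α : ℕ → ℝ)
    (f : (Fin M → ℝ) → (Fin M → ℝ)) (σ : (Fin M → ℝ) → ℝ)
    (hf : ContDiff ℝ 1 f) (hσ : ContDiff ℝ 1 σ)
    (hσne : ∀ n < N, σ (x n) ≠ 0)
    (Φ : (Fin M → ℝ) → ℝ) (hΦ : Differentiable ℝ Φ)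
    (Φavg : ℝ)
    (δf : ℕ → Fin M → ℝ) (δσ : ℕ → ℝ)
    (v ν : ℕ → Fin M → ℝ)
    (hv : ∀ n < N,
      v (n + 1) = -(α n) • v n + (jac f (x n)).mulVec (v n) + δf n
        + ((gradVec σ (x n)) ⬝ᵥ v n + δσ n) • b n)
    (hνN : ν N = gradVec Φ (x N))
    (hν : ∀ k < N,
      ν k = -(α k) • ν (k + 1)
        + ((jac f (x k))ᵀ + vecMulVec (gradVec σ (x k)) (b k)).mulVec (ν (k + 1))
        + ((Φ (x N) - Φavg) * (α k / σ (x k))) • b k) :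
    gradVec Φ (x N) ⬝ᵥ v N
      + (Φ (x N) - Φavg) * ∑ n ∈ Finset.range N, (α n / σ (x n)) * (b n ⬝ᵥ v n)
      = ν 0 ⬝ᵥ v 0
        + ∑ k ∈ Finset.range N, ν (k + 1) ⬝ᵥ (δf k + δσ k • b k) := by
  have key : ∀ k ∈ Finset.range N,
      ν (k+1) ⬝ᵥ v (k+1) - ν k ⬝ᵥ v k
        = ν (k+1) ⬝ᵥ (δf k + δσ k • b k)
          - (Φ (x N) - Φavg) * ((α k / σ (x k)) * (b k ⬝ᵥ v k)) := by
    intro k hk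
    rw [Finset.mem_range] at hk
    rw [hv k hk, hν k hk]
    simp only [Matrix.add_mulVec, vecMulVec_mulVec', dotProduct_add,
      add_dotProduct, smul_dotProduct, dotProduct_smul,
      neg_dotProduct, smul_eq_mul, Matrix.mulVec_transpose]
    rw [Matrix.dotProduct_mulVec (ν (k+1))]
    rw [dotProduct_comm (b k) (v k), dotProduct_comm (b k) (ν (k+1)),
      dotProduct_comm (gradVec σ (x k)) (v k)]
    ring
  have tele := Finset.sum_range_sub (fun k => ν k ⬝ᵥ v k) N
  rw [Finset.sum_congr rfl key] at tele
  rw [Finset.sum_sub_distrib, ← Finset.mul_sum] at tele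
  rw [← hνN]
  linarith [tele]
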